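/- Let σ be an order-n sign pattern and let A ∈ Q(σ) be a nilpotent matrix that allows a full-rank Jacobian. Then A is irreducible; that is, there is no nonempty proper subset S of the row/column index set such that A i j = 0 for all i ∈ S and all j ∉ S (equivalently, no simultaneous permutation of rows and columns puts A in block triangular form with more than one nonempty diagonal block). -/

import Mathlib

open Matrix Polynomial

/-- The qualitative class of a sign pattern `σ`: real matrices whose entrywise sign is `σ`. -/
def Qclass {n : ℕ} (σ : Matrix (Fin n) (Fin n) ℝ) : Set (Matrix (Fin n) (Fin n) ℝ) :=
  {A | ∀ i j, Real.sign (A i j) = σ i j}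

/-- The sign pattern of a real matrix. -/
noncomputable def signPattern {n : ℕ} (B : Matrix (Fin n) (Fin n) ℝ) : Matrix (Fin n) (Fin n) ℝ :=
  Matrix.of fun i j => Real.sign (B i j)

/-- `σ'` is a superpattern of `σ`. -/
def Superpattern {n : ℕ} (σ' σ : Matrix (Fin n) (Fin n) ℝ) : Prop :=
  ∀ i j, σ i j ≠ 0 → σ' i j = σ i j

/-- A sign pattern is spectrally arbitrary if every monic real polynomial of degree `n`
is the characteristic polynomial of some realization. -/
def SpectrallyArbitrary {n : ℕ} (σ : Matrix (Fin n) (Fin n) ℝ) : Prop :=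
  ∀ p : Polynomial ℝ, p.Monic → p.natDegree = n → ∃ A ∈ Qclass σ, A.charpoly = p

/-- The matrix obtained from `A` by replacing the entries in positions `S` by the variables `x`. -/
def matWithVars {n : ℕ} (A : Matrix (Fin n) (Fin n) ℝ) (S : Finset (Fin n × Fin n))
    (x : S → ℝ) : Matrix (Fin n) (Fin n) ℝ :=
  Matrix.of fun i j => if h : (i, j) ∈ S then x ⟨(i, j), h⟩ else A i j

/-- The coefficient vector `(f_1, …, f_n)` where
`charpoly (matWithVars A S x) = z^n + f_1 z^(n-1) + ⋯ + f_n`. -/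
noncomputable def coeffVec {n : ℕ} (A : Matrix (Fin n) (Fin n) ℝ) (S : Finset (Fin n × Fin n))
    (x : S → ℝ) : Fin n → ℝ :=
  fun i => (matWithVars A S x).charpoly.coeff (n - 1 - (i : ℕ))

/-- `A ∈ Q(σ)` allows a full-rank Jacobian: for some set `S` of positions where `σ` is nonzero,
the Fréchet derivative at `A` of the coefficient map is surjective. -/
def AllowsFullRankJacobian {n : ℕ} (σ A : Matrix (Fin n) (Fin n) ℝ) : Prop :=
  ∃ S : Finset (Fin n × Fin n), (∀ p ∈ S, σ p.1 p.2 ≠ 0) ∧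
    ∃ L : (↥S → ℝ) →L[ℝ] (Fin n → ℝ),
      HasFDerivAt (coeffVec A S) L (fun p => A p.1.1 p.1.2) ∧ Function.Surjective L

section AuxStatement3

variable {E : Type*} [NormedAddCommGroup E] [NormedSpace ℝ E]

private lemma aux3_diff_prod {ι : Type*} (s : Finset ι) (f : ι → E → ℝ) (x : E)
    (hf : ∀ i ∈ s, DifferentiableAt ℝ (f i) x) :
    DifferentiableAt ℝ (fun y => ∏ i ∈ s, f i y) x := by
  classical
  induction s using Finset.induction with
  | empty => simp only [Finset.prod_empty]; exact differentiableAt_const 1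
  | @insert a s ha ih =>
      simp only [Finset.prod_insert ha]
      exact (hf a (Finset.mem_insert_self a s)).mul
        (ih fun i hi => hf i (Finset.mem_insert_of_mem hi))

private lemma aux3_diff_det {ι : Type*} [Fintype ι] [DecidableEq ι]
    (f : E → Matrix ι ι ℝ) (x : E)
    (hf : ∀ i j, DifferentiableAt ℝ (fun y => f y i j) x) :
    DifferentiableAt ℝ (fun y => (f y).det) x := by
  simp only [Matrix.det_apply']
  apply DifferentiableAt.fun_sum
  intro σ _
  exact (aux3_diff_prod Finset.univ (fun i y => f y (σ i) i) x (fun i _ => hf (σ i) i)).const_mul _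

private lemma aux3_block_mul {n : ℕ} (p : Fin n → Prop) [DecidablePred p]
    (M N : Matrix (Fin n) (Fin n) ℝ)
    (hM : ∀ i j, p i → ¬ p j → M i j = 0) (hN : ∀ i j, p i → ¬ p j → N i j = 0) :
    (M * N).toSquareBlockProp p = M.toSquareBlockProp p * N.toSquareBlockProp p ∧
      (M * N).toSquareBlockProp (fun i => ¬ p i) =
        M.toSquareBlockProp (fun i => ¬ p i) * N.toSquareBlockProp (fun i => ¬ p i) := by
  constructor
  · ext i j
    show ∑ k : Fin n, M (i : Fin n) k * N k (j : Fin n) =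
      ∑ k : {a // p a}, M (i : Fin n) (k : Fin n) * N (k : Fin n) (j : Fin n)
    rw [← Finset.sum_subtype (Finset.univ.filter p)
      (fun x => by simp) (fun k => M (i : Fin n) k * N k (j : Fin n))]
    symm
    apply Finset.sum_subset (Finset.filter_subset _ _)
    intro k _ hk
    simp only [Finset.mem_filter, Finset.mem_univ, true_and] at hk
    rw [hM _ _ i.2 hk, zero_mul]
  · ext i j
    show ∑ k : Fin n, M (i : Fin n) k * N k (j : Fin n) =
      ∑ k : {a // ¬ p a}, M (i : Fin n) (k : Fin n) * N (k : Fin n) (j : Fin n)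
    rw [← Finset.sum_subtype (Finset.univ.filter (fun i => ¬ p i))
      (fun x => by simp) (fun k => M (i : Fin n) k * N k (j : Fin n))]
    symm
    apply Finset.sum_subset (Finset.filter_subset _ _)
    intro k _ hk
    simp only [Finset.mem_filter, Finset.mem_univ, true_and, not_not] at hk
    rw [hN _ _ hk j.2, mul_zero]

private lemma aux3_block_pow {n : ℕ} (p : Fin n → Prop) [DecidablePred p]
    (A : Matrix (Fin n) (Fin n) ℝ)
    (hA0 : ∀ i j, p i → ¬ p j → A i j = 0) (m : ℕ) :
    (A ^ (m + 1)).toSquareBlockProp p = (A.toSquareBlockProp p) ^ (m + 1) ∧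
      (A ^ (m + 1)).toSquareBlockProp (fun i => ¬ p i) =
        (A.toSquareBlockProp (fun i => ¬ p i)) ^ (m + 1) ∧
      (∀ i j, p i → ¬ p j → (A ^ (m + 1)) i j = 0) := by
  induction m with
  | zero => simpa using hA0
  | succ m ih =>
      obtain ⟨h1, h2, h3⟩ := ih
      have hmul := aux3_block_mul p (A ^ (m + 1)) A h3 hA0
      refine ⟨?_, ?_, ?_⟩
      · rw [pow_succ, hmul.1, h1, ← pow_succ]
      · rw [pow_succ, hmul.2, h2, ← pow_succ]
      · intro i j hi hj
        rw [pow_succ, Matrix.mul_apply]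
        apply Finset.sum_eq_zero
        intro k _
        by_cases hk : p k
        · rw [hA0 _ _ hk hj, mul_zero]
        · rw [h3 _ _ hi hk, zero_mul]

end AuxStatement3

/-- A nilpotent realization of a sign pattern allowing a full-rank Jacobian
is irreducible. -/
theorem statement3 {n : ℕ} (σ A : Matrix (Fin n) (Fin n) ℝ)
    (hA : A ∈ Qclass σ) (hnil : IsNilpotent A) (hJ : AllowsFullRankJacobian σ A) :
    ¬ ∃ S : Set (Fin n), S.Nonempty ∧ S ≠ Set.univ ∧
        ∀ i ∈ S, ∀ j, j ∉ S → A i j = 0 := by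
  classical
  obtain ⟨S', hS'σ, L, hL, hLs⟩ := hJ
  rintro ⟨T, hTne, hTuniv, hT0⟩
  obtain ⟨i0, hi0⟩ := hTne
  obtain ⟨j0, hj0⟩ : ∃ j, j ∉ T := by
    by_contra h; push_neg at h; exact hTuniv (Set.eq_univ_of_forall h)
  set p : Fin n → Prop := fun i => i ∈ T with hp
  have hA0 : ∀ i j, p i → ¬ p j → A i j = 0 := fun i j hi hj => hT0 i hi j hj
  -- the variables matrix keeps the zero block
  have hM0 : ∀ (x : ↥S' → ℝ) i j, p i → ¬ p j → matWithVars A S' x i j = 0 := by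
    intro x i j hi hj
    have hnot : (i, j) ∉ S' := by
      intro hmem
      apply hS'σ _ hmem
      have h1 := hA i j
      rw [← h1, hA0 i j hi hj, Real.sign_zero]
    simp [matWithVars, hnot, hA0 i j hi hj]
  set a : ↥S' → ℝ := fun q => A q.1.1 q.1.2 with ha
  have hMa : matWithVars A S' a = A := by
    ext i j
    simp only [matWithVars, Matrix.of_apply]
    split_ifs with h <;> rfl
  -- the diagonal blocks of `A` are nilpotent, hence singular
  obtain ⟨m, hm⟩ := hnil
  have hm1 : A ^ (m + 1) = 0 := by rw [pow_succ, hm, Matrix.zero_mul]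
  obtain ⟨hb1, hb2, -⟩ := aux3_block_pow p A hA0 m
  haveI hne1 : Nonempty {i // p i} := ⟨⟨i0, hi0⟩⟩
  haveI hne2 : Nonempty {i // ¬ p i} := ⟨⟨j0, hj0⟩⟩
  have hzblock : ∀ (q : Fin n → Prop),
      ((0 : Matrix (Fin n) (Fin n) ℝ).toSquareBlockProp q) = 0 := by
    intro q; ext i j; simp [Matrix.toSquareBlockProp]
  have hdet1 : (A.toSquareBlockProp p).det = 0 := by
    have h : (A.toSquareBlockProp p).det ^ (m + 1) = 0 := by
      rw [← Matrix.det_pow, ← hb1, hm1, hzblock, Matrix.det_zero]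
    exact pow_eq_zero_iff (Nat.succ_ne_zero m) |>.mp h
  have hdet2 : (A.toSquareBlockProp (fun i => ¬ p i)).det = 0 := by
    have h : (A.toSquareBlockProp (fun i => ¬ p i)).det ^ (m + 1) = 0 := by
      rw [← Matrix.det_pow, ← hb2, hm1, hzblock, Matrix.det_zero]
    exact pow_eq_zero_iff (Nat.succ_ne_zero m) |>.mp h
  -- the two block-determinant functions
  set d1 : (↥S' → ℝ) → ℝ :=
    fun x => ((matWithVars A S' x).toSquareBlockProp p).det with hd1def
  set d2 : (↥S' → ℝ) → ℝ :=
    fun x => ((matWithVars A S' x).toSquareBlockProp (fun i => ¬ p i)).det with hd2def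
  have hfact : ∀ x, (matWithVars A S' x).det = d1 x * d2 x := fun x =>
    Matrix.twoBlockTriangular_det' _ p (fun i hi j hj => hM0 x i j hi hj)
  have hd1a : d1 a = 0 := by
    rw [show d1 a = ((matWithVars A S' a).toSquareBlockProp p).det from rfl, hMa]
    exact hdet1
  have hd2a : d2 a = 0 := by
    rw [show d2 a = ((matWithVars A S' a).toSquareBlockProp (fun i => ¬ p i)).det from rfl, hMa]
    exact hdet2
  -- differentiability of the entries
  have hent : ∀ i j, DifferentiableAt ℝ (fun x : ↥S' → ℝ => matWithVars A S' x i j) a := by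
    intro i j
    by_cases h : (i, j) ∈ S'
    · simp only [matWithVars, Matrix.of_apply, dif_pos h]
      exact (ContinuousLinearMap.proj (R := ℝ) (φ := fun _ : ↥S' => ℝ)
        (⟨(i, j), h⟩ : ↥S')).differentiableAt
    · simp only [matWithVars, Matrix.of_apply, dif_neg h]
      exact differentiableAt_const _
  have hd1 : DifferentiableAt ℝ d1 a :=
    aux3_diff_det (fun x => (matWithVars A S' x).toSquareBlockProp p) a
      (fun i j => hent i.1 j.1)
  have hd2 : DifferentiableAt ℝ d2 a :=
    aux3_diff_det (fun x => (matWithVars A S' x).toSquareBlockProp (fun i => ¬ p i)) a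
      (fun i j => hent i.1 j.1)
  obtain ⟨L1, hL1⟩ := hd1
  obtain ⟨L2, hL2⟩ := hd2
  have hprod : HasFDerivAt (fun x => d1 x * d2 x) ((d1 a • L2 + d2 a • L1 : (↥S' → ℝ) →L[ℝ] ℝ)) a := hL1.mul hL2
  have hzero : HasFDerivAt (fun x => d1 x * d2 x) (0 : (↥S' → ℝ) →L[ℝ] ℝ) a := by
    have hz : (d1 a • L2 + d2 a • L1) = 0 := by rw [hd1a, hd2a]; simp
    rwa [hz] at hprod
  -- the last coordinate of the coefficient map
  have hn : 0 < n := Fin.pos i0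
  set k : Fin n := ⟨n - 1, by omega⟩ with hk
  have hgdef : ∀ x, coeffVec A S' x k = (-1 : ℝ) ^ n * (d1 x * d2 x) := by
    intro x
    have hds := Matrix.det_eq_sign_charpoly_coeff (matWithVars A S' x)
    rw [Fintype.card_fin] at hds
    have hk0 : n - 1 - ((k : Fin n) : ℕ) = 0 := by simp [hk]
    show (matWithVars A S' x).charpoly.coeff (n - 1 - ((k : Fin n) : ℕ)) =
      (-1 : ℝ) ^ n * (d1 x * d2 x)
    rw [hk0, show d1 x * d2 x = (matWithVars A S' x).det from (hfact x).symm, hds,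
      ← mul_assoc, ← mul_pow]
    norm_num
  have hg0 : HasFDerivAt (fun x => coeffVec A S' x k) (0 : (↥S' → ℝ) →L[ℝ] ℝ) a := by
    have h1 : HasFDerivAt (fun x => (-1 : ℝ) ^ n * (d1 x * d2 x))
        ((-1 : ℝ) ^ n • (0 : (↥S' → ℝ) →L[ℝ] ℝ)) a := hzero.const_mul _
    rw [smul_zero] at h1
    have hfun : (fun x => coeffVec A S' x k) = fun x => (-1 : ℝ) ^ n * (d1 x * d2 x) :=
      funext hgdef
    rw [hfun]
    exact h1
  have hgL : HasFDerivAt (fun x => coeffVec A S' x k)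
      ((ContinuousLinearMap.proj (R := ℝ) (φ := fun _ : Fin n => ℝ) k).comp L) a :=
    (ContinuousLinearMap.proj (R := ℝ) (φ := fun _ : Fin n => ℝ) k).hasFDerivAt.comp a hL
  have heq : (ContinuousLinearMap.proj (R := ℝ) (φ := fun _ : Fin n => ℝ) k).comp L = 0 :=
    hgL.unique hg0
  obtain ⟨y, hy⟩ := hLs (Pi.single k 1)
  have hone : (1 : ℝ) = 0 := by
    calc (1 : ℝ) = L y k := by rw [hy, Pi.single_eq_same]
    _ = ((ContinuousLinearMap.proj (R := ℝ) (φ := fun _ : Fin n => ℝ) k).comp L) y := rfl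
    _ = 0 := by rw [heq]; rfl
  exact one_ne_zero hone
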